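/- If a binary word f has a 2-tilde-error overlap of type SS with adjacent error positions and blocks 1001 aligned against 0110 (i.e., f = w2·1001·w3·w4 = w1·w2·0110·w3 with |w1| = r), then the words α̃ = w1·w2·0101·w3·w4 and β̃ = w1·w2·1010·w3·w4 are both f-free, dist~(α̃, β̃) = 2, and every minimal tilde-transformation from α̃ to β̃ has an intermediate word containing f; hence (α̃, β̃) is a pair of tilde-witnesses for f. -/

import Mathlib

/-- Edit operations on binary words: `R i` flips the bit at position `i`,
`S i` swaps the (distinct) bits at positions `i` and `i+1`. Positions are 0-based. -/
inductive TOp where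
  | R (i : ℕ)
  | S (i : ℕ)
deriving DecidableEq

namespace TOp

def apply : TOp → List Bool → List Bool
  | R i, w => w.set i (!(w.getD i false))
  | S i, w => (w.set i (w.getD (i+1) false)).set (i+1) (w.getD i false)

def valid : TOp → List Bool → Prop
  | R i, w => i < w.length
  | S i, w => i + 1 < w.length ∧ w.getD i false ≠ w.getD (i+1) false

/-- The set of positions modified by an operation. -/
def positions : TOp → Finset ℕ
  | R i => {i}
  | S i => {i, i+1}

/-- The (leftmost) position of an operation. -/
def pos : TOp → ℕ
  | R i => i
  | S i => i

def isR : TOp → Prop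
  | R _ => True
  | S _ => False

def isS : TOp → Prop
  | R _ => False
  | S _ => True

end TOp

/-- All operations of a sequence are valid when applied successively starting from `w`. -/
def validSeq : List TOp → List Bool → Prop
  | [], _ => True
  | o :: os, w => o.valid w ∧ validSeq os (o.apply w)

def applySeq : List TOp → List Bool → List Bool
  | [], w => w
  | o :: os, w => applySeq os (o.apply w)

/-- `ops` is a tilde-transformation from `u` to `v`. -/
def Transforms (ops : List TOp) (u v : List Bool) : Prop :=
  validSeq ops u ∧ applySeq ops u = v

/-- The swap-mismatch (tilde) distance between two words. -/
noncomputable def tdist (u v : List Bool) : ℕ :=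
  sInf { n | ∃ ops : List TOp, ops.length = n ∧ Transforms ops u v }

/-- Each position of the word is modified at most once along the sequence. -/
def eachPosOnce (ops : List TOp) : Prop :=
  ops.Pairwise fun o o' => Disjoint o.positions o'.positions

/-- A minimal tilde-transformation: length `tdist u v`, each position changed at most once. -/
def MinimalTransf (ops : List TOp) (u v : List Bool) : Prop :=
  Transforms ops u v ∧ ops.length = tdist u v ∧ eachPosOnce ops

/-- The list of all words `w_0 = u, w_1, …, w_h` visited by the transformation. -/
def trajectory (ops : List TOp) (u : List Bool) : List (List Bool) :=
  List.scanl (fun w o => o.apply w) u ops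

/-- `w` avoids `f` as a factor. -/
def FFree (f w : List Bool) : Prop := ¬ f <:+: w

/-- All words along the transformation are `f`-free. -/
def FreeTransf (f : List Bool) (ops : List TOp) (u : List Bool) : Prop :=
  ∀ w ∈ trajectory ops u, FFree f w

/-- `f` is tilde-isometric. -/
def TildeIsometric (f : List Bool) : Prop :=
  ∀ u v : List Bool, u.length = v.length → f.length < u.length →
    FFree f u → FFree f v →
      ∃ ops : List TOp, MinimalTransf ops u v ∧ FreeTransf f ops u

/-- `(u,v)` is a pair of tilde-witnesses for `f`. -/
def Witnesses (f u v : List Bool) : Prop :=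
  u.length = v.length ∧ FFree f u ∧ FFree f v ∧ 2 ≤ tdist u v ∧
    ∀ ops : List TOp, MinimalTransf ops u v → ¬ FreeTransf f ops u

/-- Hamming distance between equal-length words (number of mismatch positions). -/
def hdist (u v : List Bool) : ℕ := ((u.zip v).filter fun p => p.1 != p.2).length

section Toolbox

open List

lemma getD_set_ne' (l : List Bool) {i j : ℕ} (h : i ≠ j) (a : Bool) :
    (l.set i a).getD j false = l.getD j false := by
  simp [List.getD_eq_getElem?_getD, List.getElem?_set_ne h]

lemma getD_set_self' (l : List Bool) {i : ℕ} (h : i < l.length) (a : Bool) :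
    (l.set i a).getD i false = a := by
  simp [List.getD_eq_getElem?_getD, List.getElem?_set_self h]

lemma getD_pre (u v : List Bool) {k : ℕ} (hk : k < u.length) :
    (u ++ v).getD k false = u.getD k false := List.getD_append u v false k hk

lemma getD_mid (u v : List Bool) (j : ℕ) {k : ℕ} (hk : k = u.length + j) :
    (u ++ v).getD k false = v.getD j false := by
  subst hk
  rw [List.getD_append_right u v false _ (Nat.le_add_right _ _)]
  simp

/-- Pointwise comparison of two words of shape `A ++ q ++ B` with `q` of length 4. -/
lemma sandwich (A q q' B B' : List Bool) (hq : q.length = 4) (hq' : q'.length = 4)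
    (j : ℕ)
    (hj : j < A.length ∨ ∃ m : ℕ, j = A.length + m ∧
      ((m < 4 ∧ q.getD m false = q'.getD m false) ∨
       (4 ≤ m ∧ B.getD (m - 4) false = B'.getD (m - 4) false))) :
    (A ++ q ++ B).getD j false = (A ++ q' ++ B').getD j false := by
  rw [List.append_assoc, List.append_assoc]
  rcases hj with hj | ⟨m, rfl, hm⟩
  · rw [getD_pre A _ hj, getD_pre A _ hj]
  · rw [getD_mid A _ m rfl, getD_mid A _ m rfl]
    rcases hm with ⟨hm4, hqq⟩ | ⟨hm4, hBB⟩
    · rw [getD_pre q _ (by omega), getD_pre q' _ (by omega)]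
      exact hqq
    · rw [getD_mid q B (m - 4) (by omega), getD_mid q' B' (m - 4) (by omega)]
      exact hBB

lemma getD_quad_val (A B : List Bool) (x0 x1 x2 x3 : Bool) {j : ℕ} (δ : ℕ)
    (hδ : j = A.length + δ) (h4 : δ < 4) :
    (A ++ [x0, x1, x2, x3] ++ B).getD j false = [x0, x1, x2, x3].getD δ false := by
  rw [List.append_assoc, getD_mid A _ δ hδ, getD_pre _ _ (by simp; omega)]

lemma apply_S_mid (A B : List Bool) (x y : Bool) {i : ℕ} (hi : i = A.length) :
    (TOp.S i).apply (A ++ [x, y] ++ B) = A ++ [y, x] ++ B := by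
  subst hi
  have h1 : (A ++ [x, y] ++ B).getD A.length false = x := by
    rw [List.append_assoc, getD_mid A _ 0 (by omega)]; rfl
  have h2 : (A ++ [x, y] ++ B).getD (A.length + 1) false = y := by
    rw [List.append_assoc, getD_mid A _ 1 rfl]; rfl
  show ((A ++ [x, y] ++ B).set A.length _).set (A.length + 1) _ = _
  rw [h1, h2, List.append_assoc, List.append_assoc]
  rw [List.set_append, if_neg (by omega)]
  rw [List.set_append, if_neg (by simp)]
  simp

lemma infix_occ {f m : List Bool} (h : f <:+: m) :
    ∃ t, t + f.length ≤ m.length ∧ ∀ i < f.length, m.getD (t + i) false = f.getD i false := by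
  obtain ⟨s, t2, h⟩ := h
  refine ⟨s.length, ?_, ?_⟩
  · rw [← h]; simp only [List.length_append]; omega
  · intro i hi
    rw [← h, List.append_assoc, getD_mid s _ i rfl, getD_pre f _ hi]

end Toolbox
section Core

/-- Core combinatorial contradiction for the word `α̃` (center 0101). -/
lemma coreA (g a : ℕ → Bool) (r b n : ℕ) (hn : r + b + 4 ≤ n)
    (P1 : ∀ j, j < n → j ≠ r + b + 2 → j ≠ r + b + 3 → a j = g j)
    (P2 : ∀ j, j < n → j ≠ b → j ≠ b + 1 → a (r + j) = g j)
    (vgb : g b = true) (vg2 : g (b + 2) = false) (vG2 : g (r + b + 2) = true)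
    (va0 : a (r + b) = false)
    (t : ℕ) (ht : t ≤ r)
    (occ : ∀ i, i < n → a (t + i) = g i) : False := by
  rcases eq_or_lt_of_le ht with rfl | htr
  · have h1 := occ b (by omega)
    rw [show t + b = t + b from rfl] at h1
    rw [va0] at h1
    rw [vgb] at h1
    exact absurd h1 (by simp)
  · -- g (t + b + 2) = false
    have e1 : g (t + b + 2) = false := by
      have h1 := occ (b + 2) (by omega)
      have h2 := P1 (t + b + 2) (by omega) (by omega) (by omega)
      rw [show t + (b + 2) = t + b + 2 from by omega] at h1
      rw [h1, vg2] at h2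
      exact h2.symm
    have h3 := P2 (t + b + 2) (by omega) (by omega) (by omega)
    have h4 := occ (r + b + 2) (by omega)
    rw [show t + (r + b + 2) = r + (t + b + 2) from by omega] at h4
    rw [h3, e1, vG2] at h4
    exact absurd h4 (by simp)

/-- Core combinatorial contradiction for the word `β̃` (center 1010). -/
lemma coreB (g h : ℕ → Bool) (r b n : ℕ) (hn : r + b + 4 ≤ n)
    (Q1 : ∀ j, j < n → j ≠ r + b → j ≠ r + b + 1 → h j = g j)
    (Q2 : ∀ j, j < n → j ≠ b + 2 → j ≠ b + 3 → h (r + j) = g j)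
    (vb0 : g b = true) (vb1 : g (b + 1) = false) (vb2 : g (b + 2) = false)
    (vb3 : g (b + 3) = true)
    (vB0 : g (r + b) = false) (vB1 : g (r + b + 1) = true) (vB3 : g (r + b + 3) = false)
    (vh0 : h (r + b) = true) (vh2 : h (r + b + 2) = true)
    (t : ℕ) (ht : t ≤ r)
    (occ : ∀ i, i < n → h (t + i) = g i) : False := by
  -- one-step: g (t + i) = g i under side conditions
  have onestep : ∀ i, i < n → t + i < n → t + i ≠ r + b → t + i ≠ r + b + 1 →
      g (t + i) = g i := by
    intro i hi hti hne1 hne2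
    have h1 := occ i hi
    have h2 := Q1 (t + i) hti hne1 hne2
    rw [h1] at h2
    exact h2.symm
  -- two-step: g i = g (r + i) under side conditions
  have twostep : ∀ i, i < n → r + i < n → t + i ≠ r + b → t + i ≠ r + b + 1 →
      t + i ≠ b + 2 → t + i ≠ b + 3 → g i = g (r + i) := by
    intro i hi hri hne1 hne2 hne3 hne4
    have e1 : g (t + i) = g i := onestep i hi (by omega) hne1 hne2
    have e3 := Q2 (t + i) (by omega) hne3 hne4
    have e4 := occ (r + i) hri
    rw [show t + (r + i) = r + (t + i) from by omega] at e4
    rw [e3, e1] at e4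
    exact e4
  rcases eq_or_lt_of_le ht with rfl | htr
  · -- t = r : use position b+2
    have h1 := occ (b + 2) (by omega)
    rw [show t + (b + 2) = t + b + 2 from by omega, vh2, vb2] at h1
    exact absurd h1 (by simp)
  rcases Nat.eq_zero_or_pos t with rfl | htpos
  · -- t = 0 : use position r+b
    have h1 := occ (r + b) (by omega)
    rw [show 0 + (r + b) = r + b from by omega, vh0, vB0] at h1
    exact absurd h1 (by simp)
  -- 0 < t < r
  rcases eq_or_ne t 1 with rfl | ht1
  · have h1 := onestep b (by omega) (by omega) (by omega) (by omega)
    rw [show 1 + b = b + 1 from by omega, vb1, vb0] at h1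
    exact absurd h1 (by simp)
  rcases eq_or_ne t 2 with rfl | ht2
  · have h1 := onestep b (by omega) (by omega) (by omega) (by omega)
    rw [show 2 + b = b + 2 from by omega, vb2, vb0] at h1
    exact absurd h1 (by simp)
  rcases eq_or_ne t 3 with rfl | ht3
  · rcases eq_or_ne r 4 with rfl | hr4
    · have h1 := twostep (b + 3) (by omega) (by omega) (by omega) (by omega)
        (by omega) (by omega)
      rw [show 4 + (b + 3) = 4 + b + 3 from by omega, vb3, vB3] at h1
      exact absurd h1 (by simp)
    · have h1 := twostep (b + 1) (by omega) (by omega) (by omega) (by omega)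
        (by omega) (by omega)
      rw [show r + (b + 1) = r + b + 1 from by omega, vb1, vB1] at h1
      exact absurd h1 (by simp)
  -- t ≥ 4
  have h1 := twostep b (by omega) (by omega) (by omega) (by omega) (by omega) (by omega)
  rw [vb0, vB0] at h1
  exact absurd h1 (by simp)

end Core
section Free

lemma freeA (f w1 w2 w3 w4 : List Bool)
    (h1 : f = w2 ++ [true, false, false, true] ++ w3 ++ w4)
    (h2 : f = w1 ++ w2 ++ [false, true, true, false] ++ w3) :
    FFree f (w1 ++ w2 ++ [false, true, false, true] ++ w3 ++ w4) := by
  intro hin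
  obtain ⟨t, hle, hocc⟩ := infix_occ hin
  have hf1 : f = w2 ++ [true, false, false, true] ++ (w3 ++ w4) := by
    rw [h1]; simp
  have hα : w1 ++ w2 ++ [false, true, false, true] ++ w3 ++ w4
      = (w1 ++ w2) ++ [false, true, false, true] ++ (w3 ++ w4) := by simp
  have hα2 : w1 ++ w2 ++ [false, true, false, true] ++ w3 ++ w4
      = w1 ++ (w2 ++ [false, true, false, true] ++ (w3 ++ w4)) := by simp
  have hlf : f.length = w1.length + w2.length + 4 + w3.length := by
    rw [h2]; simp only [List.length_append, List.length_cons, List.length_nil] <;> omega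
  have hlf1 : f.length = w2.length + 4 + w3.length + w4.length := by
    rw [h1]; simp only [List.length_append, List.length_cons, List.length_nil] <;> omega
  have hlα : (w1 ++ w2 ++ [false, true, false, true] ++ w3 ++ w4).length
      = f.length + w1.length := by
    simp only [List.length_append, List.length_cons, List.length_nil] <;> omega
  rw [hlα] at hle
  refine coreA (fun j => f.getD j false)
    (fun j => (w1 ++ w2 ++ [false, true, false, true] ++ w3 ++ w4).getD j false)
    w1.length w2.length f.length (by omega) ?_ ?_ ?_ ?_ ?_ ?_ t (by omega) hocc
  · -- P1
    intro j hj hne2 hne3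
    beta_reduce
    rw [hα, h2]
    apply sandwich _ _ _ _ _ (by simp) (by simp)
    rcases Nat.lt_or_ge j (w1.length + w2.length) with h | h
    · exact Or.inl (by simp only [List.length_append] <;> omega)
    · right
      refine ⟨j - (w1.length + w2.length), by simp only [List.length_append] <;> omega, ?_⟩
      rcases Nat.lt_or_ge (j - (w1.length + w2.length)) 4 with h4 | h4
      · left
        refine ⟨h4, ?_⟩
        have h0 : j - (w1.length + w2.length) = 0 ∨ j - (w1.length + w2.length) = 1 := by
          omega
        rcases h0 with h0 | h0 <;> rw [h0] <;> rfl
      · right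
        refine ⟨h4, ?_⟩
        rw [getD_pre w3 w4 (by omega)]
  · -- P2
    intro j hj hne0 hne1
    beta_reduce
    rw [hα2, getD_mid w1 _ j rfl, hf1]
    apply sandwich _ _ _ _ _ (by simp) (by simp)
    rcases Nat.lt_or_ge j w2.length with h | h
    · exact Or.inl h
    · right
      refine ⟨j - w2.length, by omega, ?_⟩
      rcases Nat.lt_or_ge (j - w2.length) 4 with h4 | h4
      · left
        refine ⟨h4, ?_⟩
        have h0 : j - w2.length = 2 ∨ j - w2.length = 3 := by omega
        rcases h0 with h0 | h0 <;> rw [h0] <;> rfl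
      · exact Or.inr ⟨h4, rfl⟩
  · beta_reduce
    rw [hf1, getD_quad_val w2 (w3 ++ w4) _ _ _ _ 0 (by omega) (by omega)]; rfl
  · beta_reduce
    rw [hf1, getD_quad_val w2 (w3 ++ w4) _ _ _ _ 2 (by omega) (by omega)]; rfl
  · beta_reduce
    rw [h2, getD_quad_val (w1 ++ w2) w3 _ _ _ _ 2
      (by simp only [List.length_append] <;> omega) (by omega)]; rfl
  · beta_reduce
    rw [hα, getD_quad_val (w1 ++ w2) (w3 ++ w4) _ _ _ _ 0
      (by simp only [List.length_append] <;> omega) (by omega)]; rfl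

lemma freeB (f w1 w2 w3 w4 : List Bool)
    (h1 : f = w2 ++ [true, false, false, true] ++ w3 ++ w4)
    (h2 : f = w1 ++ w2 ++ [false, true, true, false] ++ w3) :
    FFree f (w1 ++ w2 ++ [true, false, true, false] ++ w3 ++ w4) := by
  intro hin
  obtain ⟨t, hle, hocc⟩ := infix_occ hin
  have hf1 : f = w2 ++ [true, false, false, true] ++ (w3 ++ w4) := by
    rw [h1]; simp
  have hβ : w1 ++ w2 ++ [true, false, true, false] ++ w3 ++ w4
      = (w1 ++ w2) ++ [true, false, true, false] ++ (w3 ++ w4) := by simp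
  have hβ2 : w1 ++ w2 ++ [true, false, true, false] ++ w3 ++ w4
      = w1 ++ (w2 ++ [true, false, true, false] ++ (w3 ++ w4)) := by simp
  have hlf : f.length = w1.length + w2.length + 4 + w3.length := by
    rw [h2]; simp only [List.length_append, List.length_cons, List.length_nil] <;> omega
  have hlf1 : f.length = w2.length + 4 + w3.length + w4.length := by
    rw [h1]; simp only [List.length_append, List.length_cons, List.length_nil] <;> omega
  have hlβ : (w1 ++ w2 ++ [true, false, true, false] ++ w3 ++ w4).length
      = f.length + w1.length := by
    simp only [List.length_append, List.length_cons, List.length_nil] <;> omega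
  rw [hlβ] at hle
  refine coreB (fun j => f.getD j false)
    (fun j => (w1 ++ w2 ++ [true, false, true, false] ++ w3 ++ w4).getD j false)
    w1.length w2.length f.length (by omega) ?_ ?_ ?_ ?_ ?_ ?_ ?_ ?_ ?_ ?_ ?_
    t (by omega) hocc
  · -- Q1
    intro j hj hne0 hne1
    beta_reduce
    rw [hβ, h2]
    apply sandwich _ _ _ _ _ (by simp) (by simp)
    rcases Nat.lt_or_ge j (w1.length + w2.length) with h | h
    · exact Or.inl (by simp only [List.length_append] <;> omega)
    · right
      refine ⟨j - (w1.length + w2.length), by simp only [List.length_append] <;> omega, ?_⟩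
      rcases Nat.lt_or_ge (j - (w1.length + w2.length)) 4 with h4 | h4
      · left
        refine ⟨h4, ?_⟩
        have h0 : j - (w1.length + w2.length) = 2 ∨ j - (w1.length + w2.length) = 3 := by
          omega
        rcases h0 with h0 | h0 <;> rw [h0] <;> rfl
      · right
        refine ⟨h4, ?_⟩
        rw [getD_pre w3 w4 (by omega)]
  · -- Q2
    intro j hj hne2 hne3
    beta_reduce
    rw [hβ2, getD_mid w1 _ j rfl, hf1]
    apply sandwich _ _ _ _ _ (by simp) (by simp)
    rcases Nat.lt_or_ge j w2.length with h | h
    · exact Or.inl h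
    · right
      refine ⟨j - w2.length, by omega, ?_⟩
      rcases Nat.lt_or_ge (j - w2.length) 4 with h4 | h4
      · left
        refine ⟨h4, ?_⟩
        have h0 : j - w2.length = 0 ∨ j - w2.length = 1 := by omega
        rcases h0 with h0 | h0 <;> rw [h0] <;> rfl
      · exact Or.inr ⟨h4, rfl⟩
  · beta_reduce
    rw [hf1, getD_quad_val w2 (w3 ++ w4) _ _ _ _ 0 (by omega) (by omega)]; rfl
  · beta_reduce
    rw [hf1, getD_quad_val w2 (w3 ++ w4) _ _ _ _ 1 (by omega) (by omega)]; rfl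
  · beta_reduce
    rw [hf1, getD_quad_val w2 (w3 ++ w4) _ _ _ _ 2 (by omega) (by omega)]; rfl
  · beta_reduce
    rw [hf1, getD_quad_val w2 (w3 ++ w4) _ _ _ _ 3 (by omega) (by omega)]; rfl
  · beta_reduce
    rw [h2, getD_quad_val (w1 ++ w2) w3 _ _ _ _ 0
      (by simp only [List.length_append] <;> omega) (by omega)]; rfl
  · beta_reduce
    rw [h2, getD_quad_val (w1 ++ w2) w3 _ _ _ _ 1
      (by simp only [List.length_append] <;> omega) (by omega)]; rfl
  · beta_reduce
    rw [h2, getD_quad_val (w1 ++ w2) w3 _ _ _ _ 3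
      (by simp only [List.length_append] <;> omega) (by omega)]; rfl
  · beta_reduce
    rw [hβ, getD_quad_val (w1 ++ w2) (w3 ++ w4) _ _ _ _ 0
      (by simp only [List.length_append] <;> omega) (by omega)]; rfl
  · beta_reduce
    rw [hβ, getD_quad_val (w1 ++ w2) (w3 ++ w4) _ _ _ _ 2
      (by simp only [List.length_append] <;> omega) (by omega)]; rfl

end Free
section Ops

lemma length_apply (o : TOp) (w : List Bool) : (o.apply w).length = w.length := by
  cases o <;> simp [TOp.apply]

lemma getD_apply_not_mem (o : TOp) (w : List Bool) (j : ℕ) (hj : j ∉ o.positions) :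
    (o.apply w).getD j false = w.getD j false := by
  cases o with
  | R i =>
    simp only [TOp.positions, Finset.mem_singleton] at hj
    exact getD_set_ne' w (Ne.symm hj) _
  | S i =>
    simp only [TOp.positions, Finset.mem_insert, Finset.mem_singleton, not_or] at hj
    show ((w.set i _).set (i + 1) _).getD j false = _
    rw [getD_set_ne' _ (Ne.symm hj.2) _, getD_set_ne' _ (Ne.symm hj.1) _]

lemma getD_apply_mem (o : TOp) (w : List Bool) (hv : o.valid w) {j : ℕ}
    (hj : j ∈ o.positions) :
    (o.apply w).getD j false ≠ w.getD j false := by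
  cases o with
  | R i =>
    simp only [TOp.positions, Finset.mem_singleton] at hj
    subst hj
    show (w.set j (!(w.getD j false))).getD j false ≠ _
    rw [getD_set_self' w hv _]
    simp
  | S i =>
    obtain ⟨hlen, hne⟩ := hv
    simp only [TOp.positions, Finset.mem_insert, Finset.mem_singleton] at hj
    rcases hj with rfl | rfl
    · show ((w.set j (w.getD (j + 1) false)).set (j + 1) (w.getD j false)).getD j false ≠ _
      rw [getD_set_ne' _ (by omega) _, getD_set_self' w (by omega) _]
      exact fun h => hne h.symm
    · show ((w.set i _).set (i + 1) (w.getD i false)).getD (i + 1) false ≠ _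
      rw [getD_set_self' _ (by simpa using hlen) _]
      exact hne

lemma center_val (w1 w2 w3 w4 : List Bool) (x0 x1 x2 x3 : Bool) {j : ℕ} (δ : ℕ)
    (hj : j = w1.length + w2.length + δ) (hδ : δ < 4) :
    (w1 ++ w2 ++ [x0, x1, x2, x3] ++ w3 ++ w4).getD j false
      = [x0, x1, x2, x3].getD δ false := by
  have h : w1 ++ w2 ++ [x0, x1, x2, x3] ++ w3 ++ w4
      = (w1 ++ w2) ++ [x0, x1, x2, x3] ++ (w3 ++ w4) := by simp
  rw [h, getD_quad_val (w1 ++ w2) (w3 ++ w4) _ _ _ _ δ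
    (by simp only [List.length_append] <;> omega) hδ]

lemma offcenter (w1 w2 w3 w4 q q' : List Bool) (hq : q.length = 4) (hq' : q'.length = 4)
    (j : ℕ) (h0 : j ≠ w1.length + w2.length) (h1 : j ≠ w1.length + w2.length + 1)
    (h2 : j ≠ w1.length + w2.length + 2) (h3 : j ≠ w1.length + w2.length + 3) :
    (w1 ++ w2 ++ q ++ w3 ++ w4).getD j false
      = (w1 ++ w2 ++ q' ++ w3 ++ w4).getD j false := by
  have e : ∀ r : List Bool, w1 ++ w2 ++ r ++ w3 ++ w4
      = (w1 ++ w2) ++ r ++ (w3 ++ w4) := by intro r; simp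
  rw [e q, e q']
  apply sandwich _ _ _ _ _ hq hq'
  rcases Nat.lt_or_ge j (w1.length + w2.length) with h | h
  · exact Or.inl (by simp only [List.length_append] <;> omega)
  · right
    exact ⟨j - (w1.length + w2.length), by simp only [List.length_append] <;> omega,
      Or.inr ⟨by omega, rfl⟩⟩

lemma applyS1 (w1 w2 w3 w4 : List Bool) (x0 x1 x2 x3 : Bool) {i : ℕ}
    (hi : i = w1.length + w2.length) :
    (TOp.S i).apply (w1 ++ w2 ++ [x0, x1, x2, x3] ++ w3 ++ w4)
      = w1 ++ w2 ++ [x1, x0, x2, x3] ++ w3 ++ w4 := by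
  have h : w1 ++ w2 ++ [x0, x1, x2, x3] ++ w3 ++ w4
      = (w1 ++ w2) ++ [x0, x1] ++ ([x2, x3] ++ (w3 ++ w4)) := by simp
  rw [h, apply_S_mid _ _ _ _ (by simp only [List.length_append] <;> omega)]
  simp

lemma applyS2 (w1 w2 w3 w4 : List Bool) (x0 x1 x2 x3 : Bool) {i : ℕ}
    (hi : i = w1.length + w2.length + 2) :
    (TOp.S i).apply (w1 ++ w2 ++ [x0, x1, x2, x3] ++ w3 ++ w4)
      = w1 ++ w2 ++ [x0, x1, x3, x2] ++ w3 ++ w4 := by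
  have h : w1 ++ w2 ++ [x0, x1, x2, x3] ++ w3 ++ w4
      = ((w1 ++ w2) ++ [x0, x1]) ++ [x2, x3] ++ (w3 ++ w4) := by simp
  rw [h, apply_S_mid _ _ _ _
    (by simp only [List.length_append, List.length_cons, List.length_nil] <;> omega)]
  simp

end Ops
theorem stmt19 (f w1 w2 w3 w4 : List Bool)
    (h1 : f = w2 ++ [true, false, false, true] ++ w3 ++ w4)
    (h2 : f = w1 ++ w2 ++ [false, true, true, false] ++ w3) :
    FFree f (w1 ++ w2 ++ [false, true, false, true] ++ w3 ++ w4) ∧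
    FFree f (w1 ++ w2 ++ [true, false, true, false] ++ w3 ++ w4) ∧
    tdist (w1 ++ w2 ++ [false, true, false, true] ++ w3 ++ w4)
          (w1 ++ w2 ++ [true, false, true, false] ++ w3 ++ w4) = 2 ∧
    (∀ ops : List TOp,
        MinimalTransf ops (w1 ++ w2 ++ [false, true, false, true] ++ w3 ++ w4)
          (w1 ++ w2 ++ [true, false, true, false] ++ w3 ++ w4) →
        ¬ FreeTransf f ops (w1 ++ w2 ++ [false, true, false, true] ++ w3 ++ w4)) ∧
    Witnesses f (w1 ++ w2 ++ [false, true, false, true] ++ w3 ++ w4)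
                (w1 ++ w2 ++ [true, false, true, false] ++ w3 ++ w4) := by
  classical
  set α := w1 ++ w2 ++ [false, true, false, true] ++ w3 ++ w4 with hαdef
  set β := w1 ++ w2 ++ [true, false, true, false] ++ w3 ++ w4 with hβdef
  set γ1 := w1 ++ w2 ++ [true, false, false, true] ++ w3 ++ w4 with hγ1def
  set γ2 := w1 ++ w2 ++ [false, true, true, false] ++ w3 ++ w4 with hγ2def
  set L := w1.length + w2.length with hLdef
  have hFA : FFree f α := freeA f w1 w2 w3 w4 h1 h2
  have hFB : FFree f β := freeB f w1 w2 w3 w4 h1 h2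
  -- center values
  have vα : ∀ δ, δ < 4 → α.getD (L + δ) false = [false, true, false, true].getD δ false :=
    fun δ hδ => center_val w1 w2 w3 w4 _ _ _ _ δ rfl hδ
  have vβ : ∀ δ, δ < 4 → β.getD (L + δ) false = [true, false, true, false].getD δ false :=
    fun δ hδ => center_val w1 w2 w3 w4 _ _ _ _ δ rfl hδ
  have hne_center : ∀ δ, δ < 4 → α.getD (L + δ) false ≠ β.getD (L + δ) false := by
    intro δ hδ
    rw [vα δ hδ, vβ δ hδ]
    interval_cases δ <;> decide
  have hag : ∀ j, j ≠ L → j ≠ L + 1 → j ≠ L + 2 → j ≠ L + 3 →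
      α.getD j false = β.getD j false := by
    intro j e0 e1 e2 e3
    exact offcenter w1 w2 w3 w4 _ _ (by simp) (by simp) j e0 e1 e2 e3
  -- length facts
  have hlαβ : α.length = β.length := by
    rw [hαdef, hβdef]
    simp only [List.length_append, List.length_cons, List.length_nil]
  have hlα4 : L + 4 ≤ α.length := by
    rw [hαdef]
    simp only [List.length_append, List.length_cons, List.length_nil, hLdef]; omega
  -- the two-swap transformation
  have happ1 : (TOp.S L).apply α = γ1 := applyS1 w1 w2 w3 w4 _ _ _ _ rfl
  have happ2 : (TOp.S (L + 2)).apply γ1 = β := applyS2 w1 w2 w3 w4 _ _ _ _ rfl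
  have hval1 : (TOp.S L).valid α := by
    refine ⟨by omega, ?_⟩
    rw [show L = L + 0 from rfl, vα 0 (by omega),
      show L + 0 + 1 = L + 1 from rfl, vα 1 (by omega)]
    decide
  have hval2 : (TOp.S (L + 2)).valid γ1 := by
    have v1 : γ1.getD (L + 2) false = false :=
      center_val w1 w2 w3 w4 _ _ _ _ 2 rfl (by omega)
    have v2 : γ1.getD (L + 2 + 1) false = true :=
      center_val w1 w2 w3 w4 _ _ _ _ 3 rfl (by omega)
    have hlγ : γ1.length = α.length := by
      rw [hγ1def, hαdef]
      simp only [List.length_append, List.length_cons, List.length_nil]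
    refine ⟨by omega, ?_⟩
    rw [v1, v2]; decide
  have htrans : Transforms [TOp.S L, TOp.S (L + 2)] α β := by
    refine ⟨⟨hval1, ?_, trivial⟩, ?_⟩
    · rw [happ1]
      exact hval2
    · show applySeq [TOp.S (L + 2)] ((TOp.S L).apply α) = β
      rw [happ1]
      show (TOp.S (L + 2)).apply γ1 = β
      exact happ2
  have mem2 : (2 : ℕ) ∈ {n | ∃ ops : List TOp, ops.length = n ∧ Transforms ops α β} :=
    ⟨[TOp.S L, TOp.S (L + 2)], rfl, htrans⟩
  have lower : ∀ k ∈ {n | ∃ ops : List TOp, ops.length = n ∧ Transforms ops α β}, 2 ≤ k := by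
    rintro k ⟨ops, hlen, hval, happ⟩
    by_contra hk
    push_neg at hk
    match ops, hlen with
    | [], hlen =>
      have : α = β := happ
      exact hne_center 0 (by omega) (by rw [this])
    | [o], hlen =>
      have happ' : o.apply α = β := happ
      have hsplit : L ∉ o.positions ∨ L + 3 ∉ o.positions := by
        cases o with
        | R i =>
          simp only [TOp.positions, Finset.mem_singleton]
          omega
        | S i =>
          simp only [TOp.positions, Finset.mem_insert, Finset.mem_singleton, not_or]
          omega
      rcases hsplit with hs | hs
      · exact hne_center 0 (by omega)
          (by rw [show L + 0 = L from rfl, ← happ', getD_apply_not_mem o α L hs])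
      · exact hne_center 3 (by omega)
          (by rw [← happ', getD_apply_not_mem o α (L + 3) hs])
    | o :: o' :: os, hlen =>
      simp only [List.length_cons] at hlen
      omega
  have htd : tdist α β = 2 := le_antisymm (Nat.sInf_le mem2) (le_csInf ⟨2, mem2⟩ lower)
  -- the key clause
  have hclause : ∀ ops : List TOp, MinimalTransf ops α β → ¬ FreeTransf f ops α := by
    rintro ops ⟨⟨hval, happ⟩, hlen, honce⟩ hfree
    rw [htd] at hlen
    obtain ⟨o1, o2, rfl⟩ := List.length_eq_two.mp hlen
    have hdisj : Disjoint o1.positions o2.positions :=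
      (List.pairwise_cons.mp honce).1 o2 (by simp)
    obtain ⟨hv1, hv2, -⟩ : o1.valid α ∧ o2.valid (o1.apply α) ∧ True := hval
    have happ' : o2.apply (o1.apply α) = β := happ
    have t1 : ∀ j ∈ o1.positions, β.getD j false ≠ α.getD j false := by
      intro j hj
      rw [← happ', getD_apply_not_mem o2 _ j (Finset.disjoint_left.mp hdisj hj)]
      exact getD_apply_mem o1 α hv1 hj
    have t2 : ∀ j ∈ o2.positions, β.getD j false ≠ α.getD j false := by
      intro j hj
      rw [← happ',
        show α.getD j false = (o1.apply α).getD j false from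
          (getD_apply_not_mem o1 α j (Finset.disjoint_right.mp hdisj hj)).symm]
      exact getD_apply_mem o2 _ hv2 hj
    have tsub1 : ∀ j ∈ o1.positions, j = L ∨ j = L + 1 ∨ j = L + 2 ∨ j = L + 3 := by
      intro j hj
      by_contra h
      push_neg at h
      exact t1 j hj (hag j h.1 h.2.1 h.2.2.1 h.2.2.2).symm
    have tsub2 : ∀ j ∈ o2.positions, j = L ∨ j = L + 1 ∨ j = L + 2 ∨ j = L + 3 := by
      intro j hj
      by_contra h
      push_neg at h
      exact t2 j hj (hag j h.1 h.2.1 h.2.2.1 h.2.2.2).symm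
    have hcov : ∀ δ, δ < 4 → (L + δ) ∈ o1.positions ∨ (L + δ) ∈ o2.positions := by
      intro δ hδ
      by_contra h
      push_neg at h
      refine hne_center δ hδ ?_
      rw [← happ', getD_apply_not_mem o2 _ _ h.2, getD_apply_not_mem o1 _ _ h.1]
    -- only two swaps at L and L+2 (in some order) are possible
    have key : o1 = TOp.S L ∨ o1 = TOp.S (L + 2) := by
      have c0 := hcov 0 (by omega)
      have c1 := hcov 1 (by omega)
      have c2 := hcov 2 (by omega)
      have c3 := hcov 3 (by omega)
      cases o1 with
      | R i =>
        cases o2 with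
        | R i' =>
          simp only [TOp.positions, Finset.mem_singleton] at c0 c1 c2 c3
          omega
        | S i' =>
          simp only [TOp.positions, Finset.mem_singleton, Finset.mem_insert] at c0 c1 c2 c3
          omega
      | S i =>
        cases o2 with
        | R i' =>
          simp only [TOp.positions, Finset.mem_singleton, Finset.mem_insert] at c0 c1 c2 c3
          omega
        | S i' =>
          have m1 := tsub1 i (by simp [TOp.positions])
          have m2 := tsub1 (i + 1) (by simp [TOp.positions])
          have m1' := tsub2 i' (by simp [TOp.positions])
          have hd : i ∉ (TOp.S i').positions :=
            Finset.disjoint_left.mp hdisj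
              (show i ∈ (TOp.S i).positions by simp [TOp.positions])
          have hd2 : i + 1 ∉ (TOp.S i').positions :=
            Finset.disjoint_left.mp hdisj
              (show i + 1 ∈ (TOp.S i).positions by simp [TOp.positions])
          simp only [TOp.positions, Finset.mem_insert, Finset.mem_singleton, not_or]
            at hd hd2 c0 c1 c2 c3
          have : i = L ∨ i = L + 2 := by omega
          rcases this with rfl | rfl
          · exact Or.inl rfl
          · exact Or.inr rfl
    rcases key with rfl | rfl
    · -- middle word is γ1 = w1 ++ f
      have hmid : (TOp.S L).apply α = γ1 := happ1
      have hmem : γ1 ∈ trajectory [TOp.S L, o2] α := by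
        rw [trajectory, List.scanl_cons, List.scanl_cons]
        simp [hmid]
      refine hfree γ1 hmem ⟨w1, [], ?_⟩
      rw [h1, hγ1def]
      simp
    · -- middle word is γ2 = f ++ w4
      have hmid : (TOp.S (L + 2)).apply α = γ2 :=
        applyS2 w1 w2 w3 w4 _ _ _ _ rfl
      have hmem : γ2 ∈ trajectory [TOp.S (L + 2), o2] α := by
        rw [trajectory, List.scanl_cons, List.scanl_cons]
        simp [hmid]
      refine hfree γ2 hmem ⟨[], w4, ?_⟩
      rw [h2, hγ2def]
      simp
  exact ⟨hFA, hFB, htd, hclause, hlαβ, hFA, hFB, by omega, hclause⟩
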